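/- arXiv:1607.06067 — 2 statements merged into one kernel-verified Lean document; each statement's English description precedes it below -/
import Mathlib

section
/- Let Ω be a nonempty set, K a nonempty set, C the set of all bounded functions from K to ℝ, and U the set of bounded functions from Ω to ℝ. Suppose C' ⊆ C is nonempty, is closed under c ↦ Ac + B for all A ≥ 0 and B ∈ ℝ, and V : C' → U satisfies V[Ac+B] = A·V[c] + B for A ≥ 0, B ∈ ℝ, and V[c₁] ≤ V[c₂] pointwise whenever c₁ ≤ c₂ pointwise. Then the map V_b : C → U defined by V_b[c'](ω) = sup{ V[c](ω) : c ∈ C', c ≤ c' } is well-defined (each V_b[c'] is bounded), extends V, and satisfies the same two properties: V_b[Ac+B] = A·V_b[c] + B for A ≥ 0, B ∈ ℝ, and monotonicity V_b[c₁] ≤ V_b[c₂] whenever c₁ ≤ c₂ pointwise. -/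
/-- Extension of a game value map from a sub-cone of bounded payoffs
to all bounded payoffs. -/
theorem game_value_map_extension
    (Ω K : Type*) [Nonempty Ω] [Nonempty K]
    (C' : Set (K → ℝ)) (hC'ne : C'.Nonempty)
    (hC'bdd : ∀ c ∈ C', ∃ R : ℝ, ∀ z : K, |c z| ≤ R)
    (hC'affine : ∀ c ∈ C', ∀ A B : ℝ, 0 ≤ A → (fun z => A * c z + B) ∈ C')
    (V : (K → ℝ) → Ω → ℝ)
    (hVbdd : ∀ c ∈ C', ∃ R : ℝ, ∀ ω : Ω, |V c ω| ≤ R)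
    (hVaffine : ∀ c ∈ C', ∀ A B : ℝ, 0 ≤ A →
      V (fun z => A * c z + B) = fun ω => A * V c ω + B)
    (hVmono : ∀ c₁ ∈ C', ∀ c₂ ∈ C', (∀ z, c₁ z ≤ c₂ z) → ∀ ω, V c₁ ω ≤ V c₂ ω) :
    ∃ Vb : (K → ℝ) → Ω → ℝ,
      (∀ c' : K → ℝ, (∃ R : ℝ, ∀ z : K, |c' z| ≤ R) → ∀ ω : Ω,
        Vb c' ω = sSup {x : ℝ | ∃ c ∈ C', (∀ z, c z ≤ c' z) ∧ x = V c ω})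
      ∧ (∀ c' : K → ℝ, (∃ R : ℝ, ∀ z : K, |c' z| ≤ R) →
          ∃ R : ℝ, ∀ ω : Ω, |Vb c' ω| ≤ R)
      ∧ (∀ c ∈ C', Vb c = V c)
      ∧ (∀ c' : K → ℝ, (∃ R : ℝ, ∀ z : K, |c' z| ≤ R) → ∀ A B : ℝ, 0 ≤ A →
          Vb (fun z => A * c' z + B) = fun ω => A * Vb c' ω + B)
      ∧ (∀ c₁ c₂ : K → ℝ, (∃ R : ℝ, ∀ z : K, |c₁ z| ≤ R) →
          (∃ R : ℝ, ∀ z : K, |c₂ z| ≤ R) →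
          (∀ z, c₁ z ≤ c₂ z) → ∀ ω, Vb c₁ ω ≤ Vb c₂ ω) := by
  classical
  obtain ⟨c₀, hc₀⟩ := hC'ne
  -- constants belong to C' and V of a constant is that constant
  have hconstmem : ∀ B : ℝ, (fun _ : K => B) ∈ C' := by
    intro B
    have h := hC'affine c₀ hc₀ 0 B le_rfl
    have : (fun z => 0 * c₀ z + B) = (fun _ : K => B) := by funext z; ring
    rwa [this] at h
  have hconstV : ∀ B : ℝ, V (fun _ : K => B) = fun _ : Ω => B := by
    intro B
    have h := hVaffine c₀ hc₀ 0 B le_rfl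
    have e : (fun z => 0 * c₀ z + B) = (fun _ : K => B) := by funext z; ring
    rw [e] at h
    rw [h]; funext ω; ring
  set S : (K → ℝ) → Ω → Set ℝ :=
    fun c' ω => {x : ℝ | ∃ c ∈ C', (∀ z, c z ≤ c' z) ∧ x = V c ω} with hS
  -- nonemptiness and bounds
  have hne : ∀ (c' : K → ℝ) (R : ℝ), (∀ z, |c' z| ≤ R) → ∀ ω, (-R) ∈ S c' ω := by
    intro c' R hR ω
    refine ⟨fun _ => -R, hconstmem _, fun z => ?_, ?_⟩
    · show -R ≤ c' z
      have := (abs_le.1 (hR z)).1; linarith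
    · rw [hconstV]
  have hub : ∀ (c' : K → ℝ) (R : ℝ), (∀ z, |c' z| ≤ R) → ∀ ω,
      ∀ x ∈ S c' ω, x ≤ R := by
    rintro c' R hR ω x ⟨c, hc, hle, rfl⟩
    have h1 := hVmono c hc (fun _ => R) (hconstmem R)
      (fun z => le_trans (hle z) ((abs_le.1 (hR z)).2)) ω
    rw [hconstV] at h1
    exact h1
  have hnebdd : ∀ (c' : K → ℝ), (∃ R : ℝ, ∀ z, |c' z| ≤ R) → ∀ ω,
      (S c' ω).Nonempty ∧ BddAbove (S c' ω) := by
    rintro c' ⟨R, hR⟩ ω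
    exact ⟨⟨-R, hne c' R hR ω⟩, ⟨R, fun x hx => hub c' R hR ω x hx⟩⟩
  refine ⟨fun c' ω => sSup (S c' ω), fun _ _ _ => rfl, ?_, ?_, ?_, ?_⟩
  · -- boundedness
    rintro c' ⟨R, hR⟩
    refine ⟨R, fun ω => ?_⟩
    rw [abs_le]
    constructor
    · exact le_csSup ⟨R, fun x hx => hub c' R hR ω x hx⟩ (hne c' R hR ω)
    · exact csSup_le ⟨-R, hne c' R hR ω⟩ (fun x hx => hub c' R hR ω x hx)
  · -- extension
    intro c hc
    funext ω
    obtain ⟨hn, hb⟩ := hnebdd c (hC'bdd c hc) ω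
    refine le_antisymm (csSup_le hn ?_) (le_csSup hb ⟨c, hc, fun z => le_rfl, rfl⟩)
    rintro x ⟨c₁, hc₁, hle, rfl⟩
    exact hVmono c₁ hc₁ c hc hle ω
  · -- affine equivariance
    intro c' hbddc' A B hA
    have hbdd2 : ∃ R : ℝ, ∀ z, |A * c' z + B| ≤ R := by
      obtain ⟨R, hR⟩ := hbddc'
      exact ⟨A * R + |B|, fun z => le_trans (abs_add_le _ _)
        (by rw [abs_mul, abs_of_nonneg hA]
            have := hR z
            nlinarith [abs_nonneg (c' z)])⟩
    rcases eq_or_lt_of_le hA with hA0 | hApos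
    · -- A = 0
      subst hA0
      have e : (fun z => 0 * c' z + B) = (fun _ : K => B) := by funext z; ring
      funext ω
      simp only [e]
      have hmemB := hconstmem B
      obtain ⟨hn, hb⟩ := hnebdd (fun _ => B) (hC'bdd _ hmemB) ω
      have : sSup (S (fun _ : K => B) ω) = B := by
        refine le_antisymm (csSup_le hn ?_)
          (le_csSup hb ⟨fun _ => B, hmemB, fun z => le_rfl, by rw [hconstV]⟩)
        rintro x ⟨c, hc, hle, rfl⟩
        have h1 := hVmono c hc (fun _ => B) hmemB hle ω
        rw [hconstV] at h1; exact h1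
      rw [this]; ring
    · -- A > 0
      funext ω
      have hset : S (fun z => A * c' z + B) ω = (fun x => A * x + B) '' (S c' ω) := by
        ext x
        constructor
        · rintro ⟨c, hc, hle, rfl⟩
          have hd : (fun z => (1/A) * c z + (-B/A)) ∈ C' :=
            hC'affine c hc _ _ (by positivity)
          refine ⟨V (fun z => (1/A) * c z + (-B/A)) ω,
            ⟨_, hd, fun z => ?_, rfl⟩, ?_⟩
          · have h : c z ≤ A * c' z + B := hle z
            rw [show (1/A) * c z + -B/A = (c z - B)/A by ring, div_le_iff₀ hApos]
            linarith
          · have e : (fun z => A * ((1/A) * c z + (-B/A)) + B) = c := by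
              funext z; field_simp; ring
            have h3 := hVaffine _ hd A B hA
            rw [e] at h3
            rw [h3]
        · rintro ⟨x, ⟨c, hc, hle, rfl⟩, rfl⟩
          refine ⟨fun z => A * c z + B, hC'affine c hc A B hA, fun z => ?_, ?_⟩
          · show A * c z + B ≤ A * c' z + B
            have := hle z; nlinarith
          · rw [hVaffine c hc A B hA]
      show sSup (S (fun z => A * c' z + B) ω) = A * sSup (S c' ω) + B
      rw [hset]
      obtain ⟨hn, hb⟩ := hnebdd c' hbddc' ω
      have hlub : IsLUB (S c' ω) (sSup (S c' ω)) := isLUB_csSup hn hb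
      have hlub2 : IsLUB ((fun x => A * x + B) '' (S c' ω))
          (A * sSup (S c' ω) + B) := by
        constructor
        · rintro _ ⟨x, hx, rfl⟩
          show A * x + B ≤ A * sSup (S c' ω) + B
          have := hlub.1 hx
          nlinarith
        · intro b hbnd
          have hub' : sSup (S c' ω) ≤ (b - B) / A := by
            apply hlub.2
            intro x hx
            have : A * x + B ≤ b := hbnd ⟨x, hx, rfl⟩
            rw [le_div_iff₀ hApos]; linarith
          rw [le_div_iff₀ hApos] at hub'
          nlinarith
      exact hlub2.csSup_eq ⟨_, ⟨_, hn.some_mem, rfl⟩⟩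
  · -- monotonicity
    intro c₁ c₂ hb₁ hb₂ hle ω
    obtain ⟨hn1, _⟩ := hnebdd c₁ hb₁ ω
    obtain ⟨_, hb2⟩ := hnebdd c₂ hb₂ ω
    apply csSup_le_csSup hb2 hn1
    rintro x ⟨c, hc, hcle, rfl⟩
    exact ⟨c, hc, fun z => le_trans (hcle z) (hle z), rfl⟩
end

section
/- Let g : ℝ → ℝ be measurable with values in [0,1], and suppose L = lim_{λ→0⁺} λ∫₀^∞ e^{−λt} g(t) dt exists. Then lim_{T→∞} (1/T)∫₀^T g(t) dt exists and equals L. -/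
open MeasureTheory Real Filter

set_option linter.unusedSectionVars false

namespace HardyAux

open Set


lemma exp_integral_Ioi {c : ℝ} (hc : 0 < c) :
    ∫ t in Set.Ioi (0:ℝ), Real.exp (-c * t) = 1 / c := by
  have h := integral_comp_mul_left_Ioi (fun y => Real.exp (-y)) 0 hc
  simp only [mul_zero] at h
  simp only [neg_mul]
  calc ∫ t in Set.Ioi (0:ℝ), Real.exp (-(c * t)) = c⁻¹ • ∫ x in Set.Ioi (0:ℝ), Real.exp (-x) := h
    _ = 1 / c := by rw [integral_exp_neg_Ioi_zero]; simp [one_div]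

lemma int_aux {c C : ℝ} (hc : 0 < c) {f : ℝ → ℝ} (hf : Measurable f)
    (hC : ∀ t ∈ Set.Ioi (0:ℝ), |f t| ≤ C) :
    IntegrableOn (fun t => Real.exp (-c * t) * f t) (Set.Ioi 0) := by
  apply Integrable.mono' ((exp_neg_integrableOn_Ioi 0 hc).const_mul C)
  · exact (((measurable_id.const_mul (-c)).exp).mul hf).aestronglyMeasurable
  · filter_upwards [ae_restrict_mem measurableSet_Ioi] with t ht
    have h1 := hC t ht
    have h2 := Real.exp_pos (-c * t)
    rw [Real.norm_eq_abs, abs_mul, abs_of_pos h2]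
    calc Real.exp (-c*t) * |f t| ≤ Real.exp (-c*t) * C :=
          mul_le_mul_of_nonneg_left h1 h2.le
      _ = C * Real.exp (-c*t) := mul_comm _ _


section
variable (g : ℝ → ℝ) (hg : Measurable g)
  (hg01 : ∀ t : ℝ, 0 ≤ t → 0 ≤ g t ∧ g t ≤ 1)

include hg hg01 in
lemma int_pow_g {l : ℝ} (hl : 0 < l) (k : ℕ) :
    IntegrableOn (fun t => Real.exp (-l * t) ^ (k+1) * g t) (Set.Ioi 0) := by
  have hexp : ∀ t : ℝ, Real.exp (-(((k:ℝ)+1) * l) * t) = Real.exp (-l * t) ^ (k+1) := by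
    intro t
    rw [← Real.exp_nat_mul]
    push_cast
    ring_nf
  have hkl : 0 < ((k:ℝ)+1) * l := by positivity
  have := int_aux (C := 1) hkl hg (fun t ht => by
    obtain ⟨h1, h2⟩ := hg01 t (le_of_lt ht)
    rw [abs_of_nonneg h1]; exact h2)
  simpa only [hexp] using this
end

section
variable (g : ℝ → ℝ) (hg : Measurable g)
  (hg01 : ∀ t : ℝ, 0 ≤ t → 0 ≤ g t ∧ g t ≤ 1) (L : ℝ)
  (hA : Tendsto (fun l : ℝ => l * ∫ t in Set.Ioi (0:ℝ), Real.exp (-l * t) * g t)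
      (nhdsWithin 0 (Set.Ioi 0)) (nhds L))

include hg hg01 hA in
lemma L_bound : |L| ≤ 1 := by
  have hev : ∀ᶠ l in nhdsWithin (0:ℝ) (Set.Ioi 0),
      (0 ≤ l * ∫ t in Set.Ioi (0:ℝ), Real.exp (-l * t) * g t) ∧
      (l * ∫ t in Set.Ioi (0:ℝ), Real.exp (-l * t) * g t ≤ 1) := by
    filter_upwards [self_mem_nhdsWithin] with l hl
    have hl' : (0:ℝ) < l := hl
    have hint : IntegrableOn (fun t => Real.exp (-l * t) * g t) (Set.Ioi 0) :=
      int_aux (C := 1) hl' hg (fun t ht => by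
        obtain ⟨h1, h2⟩ := hg01 t (le_of_lt ht)
        rw [abs_of_nonneg h1]; exact h2)
    constructor
    · apply mul_nonneg hl'.le
      apply setIntegral_nonneg measurableSet_Ioi
      intro t ht
      exact mul_nonneg (Real.exp_pos _).le (hg01 t (le_of_lt ht)).1
    · have hle : (∫ t in Set.Ioi (0:ℝ), Real.exp (-l * t) * g t)
          ≤ ∫ t in Set.Ioi (0:ℝ), Real.exp (-l * t) := by
        apply setIntegral_mono_on hint (exp_neg_integrableOn_Ioi 0 hl') measurableSet_Ioi
        intro t ht
        nlinarith [(hg01 t (le_of_lt ht)).2, Real.exp_pos (-l * t),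
          (hg01 t (le_of_lt ht)).1]
      calc l * ∫ t in Set.Ioi (0:ℝ), Real.exp (-l * t) * g t
          ≤ l * ∫ t in Set.Ioi (0:ℝ), Real.exp (-l * t) :=
            mul_le_mul_of_nonneg_left hle hl'.le
        _ = 1 := by rw [exp_integral_Ioi hl']; field_simp
  have h1 : L ≤ 1 := le_of_tendsto hA (hev.mono fun l h => h.2)
  have h2 : 0 ≤ L := ge_of_tendsto hA (hev.mono fun l h => h.1)
  rw [abs_le]; constructor <;> linarith
end

section
variable (g : ℝ → ℝ) (hg : Measurable g)
  (hg01 : ∀ t : ℝ, 0 ≤ t → 0 ≤ g t ∧ g t ≤ 1) (L : ℝ)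
  (hA : Tendsto (fun l : ℝ => l * ∫ t in Set.Ioi (0:ℝ), Real.exp (-l * t) * g t)
      (nhdsWithin 0 (Set.Ioi 0)) (nhds L))

lemma mul_left_tendsto {c : ℝ} (hc : 0 < c) :
    Tendsto (fun l : ℝ => c * l) (nhdsWithin 0 (Set.Ioi 0)) (nhdsWithin 0 (Set.Ioi 0)) := by
  apply tendsto_nhdsWithin_of_tendsto_nhds_of_eventually_within
  · have : Tendsto (fun l : ℝ => c * l) (nhds 0) (nhds (c * 0)) :=
      (continuous_const.mul continuous_id).tendsto 0
    simpa using this.mono_left nhdsWithin_le_nhds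
  · filter_upwards [self_mem_nhdsWithin] with l hl
    exact mul_pos hc hl

include hA in
lemma monomial_limit (k : ℕ) :
    Tendsto (fun l : ℝ => l * ∫ t in Set.Ioi (0:ℝ), Real.exp (-l * t) ^ (k+1) * g t)
      (nhdsWithin 0 (Set.Ioi 0)) (nhds (L / (k+1))) := by
  have hk : (0:ℝ) < (k:ℝ) + 1 := by positivity
  have h1 : Tendsto (fun l : ℝ => (((k:ℝ)+1) * l) *
      ∫ t in Set.Ioi (0:ℝ), Real.exp (-(((k:ℝ)+1) * l) * t) * g t)
      (nhdsWithin 0 (Set.Ioi 0)) (nhds L) := hA.comp (mul_left_tendsto hk)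
  have h2 := h1.const_mul (1 / ((k:ℝ)+1))
  have heq : (fun l : ℝ => (1 / ((k:ℝ)+1)) * ((((k:ℝ)+1) * l) *
      ∫ t in Set.Ioi (0:ℝ), Real.exp (-(((k:ℝ)+1) * l) * t) * g t))
      = (fun l : ℝ => l * ∫ t in Set.Ioi (0:ℝ), Real.exp (-l * t) ^ (k+1) * g t) := by
    funext l
    have : ∀ t : ℝ, Real.exp (-(((k:ℝ)+1) * l) * t) = Real.exp (-l * t) ^ (k+1) := by
      intro t
      rw [← Real.exp_nat_mul]
      push_cast
      ring_nf
    simp_rw [this]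
    field_simp
  rw [heq] at h2
  convert h2 using 2
  ring

include hg hg01 hA in
lemma poly_limit (p : Polynomial ℝ) :
    Tendsto (fun l : ℝ => l * ∫ t in Set.Ioi (0:ℝ),
        (Real.exp (-l * t) * p.eval (Real.exp (-l * t))) * g t)
      (nhdsWithin 0 (Set.Ioi 0))
      (nhds (L * ∫ x in (0:ℝ)..1, p.eval x)) := by
  set n := p.natDegree + 1 with hn
  have heval : ∀ x : ℝ, p.eval x = ∑ k ∈ Finset.range n, p.coeff k * x ^ k :=
    fun x => by rw [hn]; exact p.eval_eq_sum_range x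
  -- limit of the sum
  have hsum : Tendsto (fun l : ℝ => ∑ k ∈ Finset.range n,
      p.coeff k * (l * ∫ t in Set.Ioi (0:ℝ), Real.exp (-l * t) ^ (k+1) * g t))
      (nhdsWithin 0 (Set.Ioi 0))
      (nhds (∑ k ∈ Finset.range n, p.coeff k * (L / (k+1)))) := by
    apply tendsto_finset_sum
    intro k _
    exact (monomial_limit g L hA k).const_mul _
  -- value identity
  have hval : (∑ k ∈ Finset.range n, p.coeff k * (L / (k+1)))
      = L * ∫ x in (0:ℝ)..1, p.eval x := by
    have : (∫ x in (0:ℝ)..1, p.eval x)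
        = ∑ k ∈ Finset.range n, p.coeff k * (1 / (k+1)) := by
      rw [intervalIntegral.integral_congr (g := fun x => ∑ k ∈ Finset.range n,
        p.coeff k * x ^ k) (fun x _ => heval x)]
      rw [intervalIntegral.integral_finset_sum]
      · apply Finset.sum_congr rfl
        intro k _
        rw [intervalIntegral.integral_const_mul, integral_pow]
        norm_num
      · intro k _
        exact (continuous_const.mul (continuous_pow k)).intervalIntegrable 0 1
    rw [this, Finset.mul_sum]
    apply Finset.sum_congr rfl
    intro k _
    field_simp
  rw [← hval]
  -- eventual equality of the functions
  apply hsum.congr'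
  filter_upwards [self_mem_nhdsWithin] with l hl
  have hl' : 0 < l := hl
  have hptwise : ∀ t : ℝ, (Real.exp (-l * t) * p.eval (Real.exp (-l * t))) * g t
      = ∑ k ∈ Finset.range n, p.coeff k * (Real.exp (-l * t) ^ (k+1) * g t) := by
    intro t
    rw [heval, Finset.mul_sum, Finset.sum_mul]
    apply Finset.sum_congr rfl
    intro k _
    ring
  rw [show (∫ t in Set.Ioi (0:ℝ), (Real.exp (-l * t) * p.eval (Real.exp (-l * t))) * g t)
      = ∑ k ∈ Finset.range n, p.coeff k *
        ∫ t in Set.Ioi (0:ℝ), Real.exp (-l * t) ^ (k+1) * g t from ?_]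
  · rw [Finset.mul_sum]
    apply Finset.sum_congr rfl
    intro k _
    ring
  · simp_rw [hptwise]
    rw [integral_finset_sum]
    · apply Finset.sum_congr rfl
      intro k _
      exact integral_const_mul _ _
    · intro k _
      exact (int_pow_g g hg hg01 hl' k).const_mul _
end

section
variable (g : ℝ → ℝ) (hg : Measurable g)
  (hg01 : ∀ t : ℝ, 0 ≤ t → 0 ≤ g t ∧ g t ≤ 1) (L : ℝ)
  (hA : Tendsto (fun l : ℝ => l * ∫ t in Set.Ioi (0:ℝ), Real.exp (-l * t) * g t)
      (nhdsWithin 0 (Set.Ioi 0)) (nhds L))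

-- integrability of the continuous-composed integrand
include hg in
lemma int_cont {l : ℝ} (hl : 0 < l) {q : ℝ → ℝ} (hq : Continuous q)
    {C : ℝ} (hC : ∀ y ∈ Set.Icc (0:ℝ) 1, |q y| ≤ C)
    {f : ℝ → ℝ} (hf : Measurable f) (hf1 : ∀ t ∈ Set.Ioi (0:ℝ), |f t| ≤ 1) :
    IntegrableOn (fun t => (Real.exp (-l * t) * q (Real.exp (-l * t))) * f t)
      (Set.Ioi 0) := by
  have hmeas : Measurable (fun t => q (Real.exp (-l * t)) * f t) :=
    (hq.measurable.comp ((measurable_id.const_mul (-l)).exp)).mul hf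
  have hbd : ∀ t ∈ Set.Ioi (0:ℝ), |q (Real.exp (-l * t)) * f t| ≤ C := by
    intro t ht
    have hmem : Real.exp (-l * t) ∈ Set.Icc (0:ℝ) 1 := by
      constructor
      · exact (Real.exp_pos _).le
      · apply Real.exp_le_one_iff.mpr  -- maybe wrong name
        nlinarith [ht.out]
    have h1 := hC _ hmem
    have hC0 : 0 ≤ C := le_trans (abs_nonneg _) h1
    rw [abs_mul]
    calc |q (Real.exp (-l*t))| * |f t| ≤ C * 1 :=
      mul_le_mul h1 (hf1 t ht) (abs_nonneg _) hC0
      _ = C := mul_one C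
  simpa only [mul_assoc] using int_aux hl hmeas hbd

include hg hg01 hA in
lemma cont_limit {q : ℝ → ℝ} (hq : Continuous q) :
    Tendsto (fun l : ℝ => l * ∫ t in Set.Ioi (0:ℝ),
        (Real.exp (-l * t) * q (Real.exp (-l * t))) * g t)
      (nhdsWithin 0 (Set.Ioi 0))
      (nhds (L * ∫ x in (0:ℝ)..1, q x)) := by
  rw [Metric.tendsto_nhds]
  intro ε hε
  have hε4 : (0:ℝ) < ε/4 := by linarith
  obtain ⟨y0, -, hy0⟩ := isCompact_Icc.exists_isMaxOn (α := ℝ) (s := Set.Icc (0:ℝ) 1)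
    ⟨0, by norm_num⟩ ((continuous_abs.comp hq).continuousOn)
  set C := |q y0| with hCdef
  have hC : ∀ y ∈ Set.Icc (0:ℝ) 1, |q y| ≤ C := fun y hy => hy0 hy
  obtain ⟨p, hp⟩ := exists_polynomial_near_of_continuousOn 0 1 q hq.continuousOn (ε/4) hε4
  have hg1 : ∀ t ∈ Set.Ioi (0:ℝ), |g t| ≤ 1 := fun t ht => by
    obtain ⟨h1, h2⟩ := hg01 t (le_of_lt ht)
    rw [abs_of_nonneg h1]; exact h2
  have hLbd := L_bound g hg hg01 L hA
  have hplim := (poly_limit g hg hg01 L hA p).eventually (Metric.ball_mem_nhds _ hε4)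
  filter_upwards [hplim, self_mem_nhdsWithin] with l hl1 hl2
  have hl : (0:ℝ) < l := hl2
  -- integrability
  have hintq : IntegrableOn (fun t => (Real.exp (-l * t) * q (Real.exp (-l * t))) * g t)
      (Set.Ioi 0) := int_cont g hg hl hq (fun y hy => hC y hy) hg hg1
  have hpc : Continuous (fun y => p.eval y) := p.continuous_aeval -- check
  have hpbd : ∀ y ∈ Set.Icc (0:ℝ) 1, |p.eval y| ≤ C + ε/4 := by
    intro y hy
    have h3 : |Polynomial.eval y p| ≤ |Polynomial.eval y p - q y| + |q y| := by
      calc |Polynomial.eval y p| = |(Polynomial.eval y p - q y) + q y| := by ring_nf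
        _ ≤ _ := abs_add_le _ _
    linarith [hp y hy, hC y hy]
  have hintp : IntegrableOn (fun t => (Real.exp (-l * t) * p.eval (Real.exp (-l * t))) * g t)
      (Set.Ioi 0) := int_cont g hg hl hpc hpbd hg hg1
  -- (a) bound |Φ_q - Φ_p| ≤ ε/4
  have ha : |l * (∫ t in Set.Ioi (0:ℝ), (Real.exp (-l * t) * q (Real.exp (-l * t))) * g t)
      - l * ∫ t in Set.Ioi (0:ℝ), (Real.exp (-l * t) * p.eval (Real.exp (-l * t))) * g t|
      ≤ ε/4 := by
    rw [← mul_sub, ← integral_sub hintq hintp, abs_mul, abs_of_pos hl]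
    have hnorm : ‖∫ t in Set.Ioi (0:ℝ),
        ((Real.exp (-l * t) * q (Real.exp (-l * t))) * g t
          - (Real.exp (-l * t) * p.eval (Real.exp (-l * t))) * g t)‖
        ≤ ∫ t in Set.Ioi (0:ℝ), (ε/4) * Real.exp (-l * t) := by
      apply norm_integral_le_of_norm_le ((exp_neg_integrableOn_Ioi 0 hl).const_mul (ε/4))
      filter_upwards [ae_restrict_mem measurableSet_Ioi] with t ht
      have hmem : Real.exp (-l * t) ∈ Set.Icc (0:ℝ) 1 := by
        constructor
        · exact (Real.exp_pos _).le
        · apply Real.exp_le_one_iff.mpr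
          nlinarith [ht.out]
      have hqp := hp _ hmem
      have hgt := hg1 t ht
      rw [Real.norm_eq_abs]
      have heq : (Real.exp (-l * t) * q (Real.exp (-l * t))) * g t
          - (Real.exp (-l * t) * p.eval (Real.exp (-l * t))) * g t
          = Real.exp (-l * t) * ((q (Real.exp (-l*t)) - p.eval (Real.exp (-l*t))) * g t) := by
        ring
      rw [heq, abs_mul, abs_of_pos (Real.exp_pos _), abs_mul]
      have h5 : |q (Real.exp (-l*t)) - p.eval (Real.exp (-l*t))| ≤ ε/4 := by
        rw [abs_sub_comm]; exact (hp _ hmem).le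
      calc Real.exp (-l*t) * (|q (Real.exp (-l*t)) - p.eval (Real.exp (-l*t))| * |g t|)
          ≤ Real.exp (-l*t) * ((ε/4) * 1) := by
            apply mul_le_mul_of_nonneg_left _ (Real.exp_pos _).le
            exact mul_le_mul h5 hgt (abs_nonneg _) hε4.le
        _ = (ε/4) * Real.exp (-l*t) := by ring
    rw [Real.norm_eq_abs] at hnorm
    calc l * |∫ t in Set.Ioi (0:ℝ), ((Real.exp (-l * t) * q (Real.exp (-l * t))) * g t
          - (Real.exp (-l * t) * p.eval (Real.exp (-l * t))) * g t)|
        ≤ l * ((ε/4) * (1/l)) := by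
          apply mul_le_mul_of_nonneg_left _ hl.le
          calc |∫ t in Set.Ioi (0:ℝ), _| ≤ ∫ t in Set.Ioi (0:ℝ), (ε/4) * Real.exp (-l * t) :=
                hnorm
            _ = (ε/4) * (1/l) := by rw [integral_const_mul, exp_integral_Ioi hl]
      _ = ε/4 := by field_simp
  -- (b) bound |L∫p - L∫q| ≤ ε/4
  have hb : |L * (∫ x in (0:ℝ)..1, p.eval x) - L * ∫ x in (0:ℝ)..1, q x| ≤ ε/4 := by
    rw [← mul_sub, abs_mul]
    have hsub : (∫ x in (0:ℝ)..1, p.eval x) - ∫ x in (0:ℝ)..1, q x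
        = ∫ x in (0:ℝ)..1, (p.eval x - q x) := by
      rw [intervalIntegral.integral_sub (hpc.intervalIntegrable 0 1)
        (hq.intervalIntegrable 0 1)]
    rw [hsub]
    have hbound : |∫ x in (0:ℝ)..1, (p.eval x - q x)| ≤ (ε/4) * |1 - 0| := by
      have := intervalIntegral.norm_integral_le_of_norm_le_const
        (C := ε/4) (f := fun x => p.eval x - q x) (a := (0:ℝ)) (b := 1) ?_
      · simpa [Real.norm_eq_abs] using this
      · intro x hx
        have hx' : x ∈ Set.Icc (0:ℝ) 1 := by
          rcases hx with ⟨h1, h2⟩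
          constructor <;> simp_all <;> linarith [h1, h2]
        rw [Real.norm_eq_abs]
        exact (hp x hx').le
    calc |L| * |∫ x in (0:ℝ)..1, (p.eval x - q x)| ≤ 1 * ((ε/4) * |1 - 0|) := by
          apply mul_le_mul hLbd hbound (abs_nonneg _) zero_le_one
      _ = ε/4 := by norm_num
  rw [Real.dist_eq] at hl1 ⊢
  have : |l * (∫ t in Set.Ioi (0:ℝ), (Real.exp (-l * t) * q (Real.exp (-l * t))) * g t)
      - L * ∫ x in (0:ℝ)..1, q x| ≤ ε/4 + ε/4 + ε/4 := by
    have htri := abs_sub_le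
      (l * ∫ t in Set.Ioi (0:ℝ), (Real.exp (-l * t) * q (Real.exp (-l * t))) * g t)
      (l * ∫ t in Set.Ioi (0:ℝ), (Real.exp (-l * t) * p.eval (Real.exp (-l * t))) * g t)
      (L * ∫ x in (0:ℝ)..1, q x)
    have htri2 := abs_sub_le
      (l * ∫ t in Set.Ioi (0:ℝ), (Real.exp (-l * t) * p.eval (Real.exp (-l * t))) * g t)
      (L * ∫ x in (0:ℝ)..1, p.eval x)
      (L * ∫ x in (0:ℝ)..1, q x)
    linarith [hl1.le]
  linarith
end


noncomputable def rlow (δ x : ℝ) : ℝ :=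
  max 0 (min (1 / max x (Real.exp (-1))) (Real.exp 1 * (x - Real.exp (-1)) / δ))

noncomputable def rhigh (δ x : ℝ) : ℝ :=
  min (1 / max x (Real.exp (-1) - δ))
    (max 0 (2 * Real.exp 1 * (x - Real.exp (-1) + δ) / δ))

lemma b_pos : 0 < Real.exp (-1) := Real.exp_pos _
lemma b_lt_one : Real.exp (-1) < 1 := by
  rw [Real.exp_lt_one_iff]; norm_num
lemma b_inv : 1 / Real.exp (-1) = Real.exp 1 := by
  rw [Real.exp_neg]; simp
lemma e_pos : 0 < Real.exp 1 := Real.exp_pos _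

section
variable {δ : ℝ} (hδ0 : 0 < δ) (hδ2 : δ < Real.exp (-1) / 2)

include hδ2 in
lemma bδ_pos : 0 < Real.exp (-1) - δ := by
  have := b_pos; linarith

include hδ2 in
lemma rlow_cont : Continuous (rlow δ) := by
  apply continuous_const.max
  apply Continuous.min
  · apply continuous_const.div (continuous_id.max continuous_const)
    intro x
    have : Real.exp (-1) ≤ max x (Real.exp (-1)) := le_max_right _ _
    have := b_pos
    positivity
  · exact ((continuous_const.mul (continuous_id.sub continuous_const)).div_const δ)

include hδ2 in
lemma rhigh_cont : Continuous (rhigh δ) := by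
  apply Continuous.min
  · apply continuous_const.div (continuous_id.max continuous_const)
    intro x
    have h1 : Real.exp (-1) - δ ≤ max x (Real.exp (-1) - δ) := le_max_right _ _
    have := bδ_pos hδ2
    positivity
  · exact continuous_const.max
      ((continuous_const.mul ((continuous_id.sub continuous_const).add continuous_const)).div_const δ)

lemma rlow_nonneg (x : ℝ) : 0 ≤ rlow δ x := le_max_left _ _

include hδ2 in
lemma rhigh_nonneg (x : ℝ) : 0 ≤ rhigh δ x := by
  apply le_min
  · have h1 : Real.exp (-1) - δ ≤ max x (Real.exp (-1) - δ) := le_max_right _ _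
    have h2 := bδ_pos hδ2
    positivity
  · exact le_max_left _ _

include hδ0 in
lemma rlow_zero {x : ℝ} (hx : x ≤ Real.exp (-1)) : rlow δ x = 0 := by
  rw [rlow, max_eq_left]
  apply min_le_of_right_le
  apply div_nonpos_of_nonpos_of_nonneg _ hδ0.le
  nlinarith [e_pos]

include hδ0 in
lemma rlow_le {x : ℝ} (hx : Real.exp (-1) ≤ x) : x * rlow δ x ≤ 1 := by
  have hx0 : 0 < x := lt_of_lt_of_le b_pos hx
  have hmax : max x (Real.exp (-1)) = x := max_eq_left hx
  have h1 : rlow δ x ≤ 1 / x := by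
    rw [rlow]
    apply max_le
    · positivity
    · rw [hmax] at *
      exact min_le_left _ _
  calc x * rlow δ x ≤ x * (1/x) := by nlinarith
    _ = 1 := by field_simp

include hδ0 in
lemma rhigh_ge {x : ℝ} (hx : Real.exp (-1) ≤ x) (hx1 : x ≤ 1) : 1 ≤ x * rhigh δ x := by
  have hx0 : 0 < x := lt_of_lt_of_le b_pos hx
  have h1 : 1 / x ≤ rhigh δ x := by
    rw [rhigh]
    apply le_min
    · rw [max_eq_left (by nlinarith : Real.exp (-1) - δ ≤ x)]
    · apply le_max_of_le_right
      have hxe : 1 / x ≤ Real.exp 1 := by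
        rw [← b_inv]
        apply div_le_div_of_nonneg_left one_pos.le b_pos hx -- maybe wrong
      have h2e : 2 * Real.exp 1 ≤ 2 * Real.exp 1 * (x - Real.exp (-1) + δ) / δ := by
        rw [le_div_iff₀ hδ0]
        nlinarith [e_pos]
      nlinarith [e_pos]
  calc (1:ℝ) = x * (1/x) := by field_simp
    _ ≤ x * rhigh δ x := by nlinarith
end

section
variable {δ : ℝ} (hδ0 : 0 < δ) (hδ2 : δ < Real.exp (-1) / 2)

lemma e_gt_two : (2:ℝ) < Real.exp 1 := lt_trans (by norm_num) Real.exp_one_gt_d9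

lemma be_one : Real.exp (-1) * Real.exp 1 = 1 := by
  rw [← Real.exp_add]; norm_num

include hδ0 hδ2 in
lemma rlow_int_bound :
    |(∫ x in (0:ℝ)..1, rlow δ x) - 1| ≤ 2 * Real.exp 1 * δ := by
  set b := Real.exp (-1) with hbdef
  set e := Real.exp 1 with hedef
  have hbe : b * e = 1 := be_one
  have hb := b_pos
  have he := e_pos
  have he2 := e_gt_two
  have hb2 : b < 1/2 := by nlinarith
  have hbδ1 : b + δ ≤ 1 := by nlinarith
  have hint : ∀ u v : ℝ, IntervalIntegrable (rlow δ) volume u v :=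
    fun u v => (rlow_cont hδ2).intervalIntegrable u v
  have hsplit : (∫ x in (0:ℝ)..1, rlow δ x)
      = (∫ x in (0:ℝ)..(b+δ), rlow δ x) + ∫ x in (b+δ)..1, rlow δ x :=
    (intervalIntegral.integral_add_adjacent_intervals (hint _ _) (hint _ _)).symm
  have htail : (∫ x in (b+δ)..1, rlow δ x) = Real.log (1/(b+δ)) := by
    rw [intervalIntegral.integral_congr (g := fun x => 1/x) ?eq]
    case eq =>
      intro x hx
      rw [Set.uIcc_of_le hbδ1] at hx
      obtain ⟨hx1, hx2⟩ := hx
      have hxb : b ≤ x := by linarith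
      have hx0 : 0 < x := by linarith
      have hmax : max x b = x := max_eq_left hxb
      have hramp : e ≤ e * (x - b) / δ := by
        rw [le_div_iff₀ hδ0]
        nlinarith
      have hinv : 1/x ≤ e := by
        rw [div_le_iff₀ hx0]
        nlinarith
      have hmax' : max x (Real.exp (-1)) = x := hmax
      have hramp' : Real.exp 1 ≤ Real.exp 1 * (x - Real.exp (-1)) / δ := hramp
      have hinv' : 1/x ≤ Real.exp 1 := hinv
      simp only [rlow, hmax']
      rw [min_eq_left (by linarith), max_eq_right (one_div_nonneg.mpr hx0.le)]
    · have hne : (0:ℝ) ∉ Set.uIcc (b+δ) 1 := by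
        rw [Set.uIcc_of_le hbδ1]
        rintro ⟨h1, -⟩
        nlinarith
      rw [integral_one_div hne]
  have hlog_up : Real.log (1/(b+δ)) ≤ 1 := by
    rw [one_div, Real.log_inv, neg_le]
    have : Real.log b ≤ Real.log (b+δ) := Real.log_le_log hb (by linarith)
    rw [hbdef] at this ⊢
    rw [Real.log_exp] at this
    linarith
  have hlog_lo : 1 - e * δ ≤ Real.log (1/(b+δ)) := by
    have h1 : Real.log ((b+δ)/b) ≤ (b+δ)/b - 1 :=
      Real.log_le_sub_one_of_pos (by positivity)
    have h2 : (b+δ)/b - 1 = δ * e := by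
      have hb0 : b ≠ 0 := ne_of_gt hb
      have hbinv : b⁻¹ = e := inv_eq_of_mul_eq_one_right hbe
      rw [div_sub_one hb0, show b + δ - b = δ by ring, div_eq_mul_inv, hbinv]
    have h3 : Real.log ((b+δ)/b) = Real.log (b+δ) - Real.log b := by
      rw [Real.log_div (by positivity) (by positivity)]
    have h4 : Real.log b = -1 := by rw [hbdef, Real.log_exp]
    rw [one_div, Real.log_inv]
    have : Real.log (b+δ) ≤ δ * e - 1 := by rw [h3, h4] at h1; linarith
    linarith [this]
  have hhead_lo : 0 ≤ ∫ x in (0:ℝ)..(b+δ), rlow δ x :=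
    intervalIntegral.integral_nonneg (by positivity) (fun u _ => rlow_nonneg u)
  have hhead_up : (∫ x in (0:ℝ)..(b+δ), rlow δ x) ≤ e * δ := by
    have hs2 : (∫ x in (0:ℝ)..(b+δ), rlow δ x)
        = (∫ x in (0:ℝ)..b, rlow δ x) + ∫ x in b..(b+δ), rlow δ x :=
      (intervalIntegral.integral_add_adjacent_intervals (hint _ _) (hint _ _)).symm
    have hz : (∫ x in (0:ℝ)..b, rlow δ x) = 0 := by
      rw [intervalIntegral.integral_congr (g := fun _ => (0:ℝ)) ?eqz]
      · simp
      case eqz =>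
        intro x hx
        rw [Set.uIcc_of_le hb.le] at hx
        exact rlow_zero hδ0 hx.2
    have hu : (∫ x in b..(b+δ), rlow δ x) ≤ ∫ x in b..(b+δ), e := by
      apply intervalIntegral.integral_mono_on (by linarith) (hint _ _)
        (intervalIntegrable_const)
      intro x hx
      have hxb : b ≤ x := hx.1
      have hmax : b ≤ max x b := le_max_right _ _
      apply max_le he.le
      apply le_trans (min_le_left _ _)
      rw [div_le_iff₀ (by linarith)]
      nlinarith [le_max_right x b]
    have hc : (∫ x in b..(b+δ), (e:ℝ)) = δ * e := by
      rw [intervalIntegral.integral_const, smul_eq_mul]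
      ring
    rw [hs2, hz, zero_add]
    rw [hc] at hu
    linarith
  rw [hsplit, htail, abs_le]
  constructor <;> nlinarith
end

section
variable {δ : ℝ} (hδ0 : 0 < δ) (hδ2 : δ < Real.exp (-1) / 2)

include hδ0 hδ2 in
lemma rhigh_int_bound :
    |(∫ x in (0:ℝ)..1, rhigh δ x) - 1| ≤ 2 * Real.exp 1 * δ := by
  set b := Real.exp (-1) with hbdef
  set e := Real.exp 1 with hedef
  have hbe : b * e = 1 := be_one
  have hb := b_pos
  have he := e_pos
  have he2 := e_gt_two
  have hb2 : b < 1/2 := by nlinarith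
  have hb1 : b ≤ 1 := by linarith
  have hbδ : 0 < b - δ := bδ_pos hδ2
  have hint : ∀ u v : ℝ, IntervalIntegrable (rhigh δ) volume u v :=
    fun u v => (rhigh_cont hδ2).intervalIntegrable u v
  have hsplit : (∫ x in (0:ℝ)..1, rhigh δ x)
      = (∫ x in (0:ℝ)..b, rhigh δ x) + ∫ x in b..1, rhigh δ x :=
    (intervalIntegral.integral_add_adjacent_intervals (hint _ _) (hint _ _)).symm
  have htail : (∫ x in b..1, rhigh δ x) = 1 := by
    have heq : (∫ x in b..1, rhigh δ x) = ∫ x in b..1, 1/x := by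
      apply intervalIntegral.integral_congr
      intro x hx
      rw [Set.uIcc_of_le hb1] at hx
      obtain ⟨hx1, hx2⟩ := hx
      have hx0 : 0 < x := by linarith
      have hmax : max x (b - δ) = x := max_eq_left (by linarith)
      have hinv : 1/x ≤ e := by
        rw [div_le_iff₀ hx0]; nlinarith
      have hramp0 : (0:ℝ) ≤ 2 * e * (x - b + δ) / δ := by
        apply div_nonneg _ hδ0.le
        nlinarith
      have hramp : 1/x ≤ 2 * e * (x - b + δ) / δ := by
        rw [le_div_iff₀ hδ0]
        nlinarith
      have hmax' : max x (Real.exp (-1) - δ) = x := hmax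
      simp only [rhigh, hmax']
      rw [max_eq_right hramp0, min_eq_left hramp]
    rw [heq]
    have hne : (0:ℝ) ∉ Set.uIcc b 1 := by
      rw [Set.uIcc_of_le hb1]
      rintro ⟨h1, -⟩
      nlinarith
    rw [integral_one_div hne, one_div, Real.log_inv, hbdef, Real.log_exp]
    norm_num
  have hhead_lo : 0 ≤ ∫ x in (0:ℝ)..b, rhigh δ x :=
    intervalIntegral.integral_nonneg hb.le (fun u _ => rhigh_nonneg hδ2 u)
  have hhead_up : (∫ x in (0:ℝ)..b, rhigh δ x) ≤ 2 * e * δ := by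
    have hs2 : (∫ x in (0:ℝ)..b, rhigh δ x)
        = (∫ x in (0:ℝ)..(b-δ), rhigh δ x) + ∫ x in (b-δ)..b, rhigh δ x :=
      (intervalIntegral.integral_add_adjacent_intervals (hint _ _) (hint _ _)).symm
    have hz : (∫ x in (0:ℝ)..(b-δ), rhigh δ x) = 0 := by
      rw [intervalIntegral.integral_congr (g := fun _ => (0:ℝ)) ?eqz]
      · simp
      case eqz =>
        intro x hx
        rw [Set.uIcc_of_le hbδ.le] at hx
        obtain ⟨hx1, hx2⟩ := hx
        have hramp : 2 * e * (x - b + δ) / δ ≤ 0 := by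
          apply div_nonpos_of_nonpos_of_nonneg _ hδ0.le
          nlinarith
        have h1 : (0:ℝ) ≤ 1 / max x (b - δ) := by
          have := le_max_right x (b - δ)
          positivity
        simp only [rhigh]
        rw [max_eq_left hramp, min_eq_right h1]
    have hu : (∫ x in (b-δ)..b, rhigh δ x) ≤ ∫ x in (b-δ)..b, 2*e := by
      apply intervalIntegral.integral_mono_on (by linarith) (hint _ _)
        (intervalIntegrable_const)
      intro x hx
      apply le_trans (min_le_left _ _)
      have hmaxge : b - δ ≤ max x (b - δ) := le_max_right _ _
      rw [div_le_iff₀ (by linarith)]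
      nlinarith
    have hc : (∫ x in (b-δ)..b, (2*e:ℝ)) = 2 * e * δ := by
      rw [intervalIntegral.integral_const, smul_eq_mul]
      ring
    rw [hs2, hz, zero_add]
    rw [hc] at hu
    linarith
  rw [hsplit, htail, abs_le]
  have h2eδ : 0 ≤ 2 * e * δ := by positivity
  constructor <;> nlinarith
end

end HardyAux

theorem hardy_tauberian
    (g : ℝ → ℝ) (hg : Measurable g)
    (hg01 : ∀ t : ℝ, 0 ≤ t → 0 ≤ g t ∧ g t ≤ 1)
    (L : ℝ)
    (hA : Tendsto (fun l : ℝ => l * ∫ t in Set.Ioi (0:ℝ), Real.exp (-l * t) * g t)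
      (nhdsWithin 0 (Set.Ioi 0)) (nhds L)) :
    Tendsto (fun T : ℝ => (1 / T) * ∫ t in (0:ℝ)..T, g t) atTop (nhds L) := by
  rw [Metric.tendsto_nhds]
  intro ε hε
  have hb := HardyAux.b_pos
  have he := HardyAux.e_pos
  have he2 := HardyAux.e_gt_two
  have hbe := HardyAux.be_one
  set δ : ℝ := min (ε / (16 * Real.exp 1)) (Real.exp (-1) / 4) with hδdef
  have hδ0 : 0 < δ := lt_min (by positivity) (by positivity)
  have hδ2 : δ < Real.exp (-1) / 2 :=
    lt_of_le_of_lt (min_le_right _ _) (by linarith)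
  have h2eδ : 2 * Real.exp 1 * δ ≤ ε / 8 := by
    have h := min_le_left (ε / (16 * Real.exp 1)) (Real.exp (-1) / 4)
    calc 2 * Real.exp 1 * δ ≤ 2 * Real.exp 1 * (ε / (16 * Real.exp 1)) := by nlinarith
      _ = ε / 8 := by field_simp; ring
  have hL := HardyAux.L_bound g hg hg01 L hA
  have hε4 : 0 < ε / 4 := by linarith
  have honeT : Tendsto (fun T : ℝ => 1 / T) atTop (nhdsWithin 0 (Set.Ioi 0)) := by
    apply tendsto_nhdsWithin_of_tendsto_nhds_of_eventually_within
    · simpa [one_div] using tendsto_inv_atTop_zero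
    · filter_upwards [eventually_gt_atTop (0:ℝ)] with T hT
      exact div_pos one_pos hT
  have h1 : ∀ᶠ T in (atTop : Filter ℝ),
      |((1/T) * ∫ t in Set.Ioi (0:ℝ),
        (Real.exp (-(1/T) * t) * HardyAux.rlow δ (Real.exp (-(1/T) * t))) * g t)
        - L * ∫ x in (0:ℝ)..1, HardyAux.rlow δ x| < ε/4 := by
    have := ((HardyAux.cont_limit g hg hg01 L hA (HardyAux.rlow_cont hδ2)).comp
      honeT).eventually (Metric.ball_mem_nhds _ hε4)
    filter_upwards [this] with T hT
    simpa [Function.comp, Real.dist_eq] using hT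
  have h2 : ∀ᶠ T in (atTop : Filter ℝ),
      |((1/T) * ∫ t in Set.Ioi (0:ℝ),
        (Real.exp (-(1/T) * t) * HardyAux.rhigh δ (Real.exp (-(1/T) * t))) * g t)
        - L * ∫ x in (0:ℝ)..1, HardyAux.rhigh δ x| < ε/4 := by
    have := ((HardyAux.cont_limit g hg hg01 L hA (HardyAux.rhigh_cont hδ2)).comp
      honeT).eventually (Metric.ball_mem_nhds _ hε4)
    filter_upwards [this] with T hT
    simpa [Function.comp, Real.dist_eq] using hT
  filter_upwards [h1, h2, eventually_gt_atTop (0:ℝ)] with T hT1 hT2 hT0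
  have hl0 : 0 < 1/T := div_pos one_pos hT0
  have hg1 : ∀ t ∈ Set.Ioi (0:ℝ), |g t| ≤ 1 := fun t ht => by
    obtain ⟨ha, hb'⟩ := hg01 t (le_of_lt ht)
    rw [abs_of_nonneg ha]; exact hb'
  -- the middle function
  have hindeq : (fun t => if t ≤ T then g t else 0) = Set.indicator (Set.Iic T) g := by
    funext t
    simp [Set.indicator_apply, Set.mem_Iic]
  have hgIoc : IntegrableOn g (Set.Ioc 0 T) := by
    apply Integrable.mono' ((integrableOn_const_iff (C := (1:ℝ))).mpr (Or.inr measure_Ioc_lt_top))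
      hg.aestronglyMeasurable
    filter_upwards [ae_restrict_mem measurableSet_Ioc] with t ht
    exact hg1 t ht.1
  have hmid_int : IntegrableOn (fun t => if t ≤ T then g t else 0) (Set.Ioi 0) := by
    rw [hindeq, IntegrableOn, integrable_indicator_iff measurableSet_Iic,
      IntegrableOn, Measure.restrict_restrict measurableSet_Iic,
      Set.inter_comm, Set.Ioi_inter_Iic]
    exact hgIoc
  have hmid : (∫ t in (0:ℝ)..T, g t)
      = ∫ t in Set.Ioi (0:ℝ), (if t ≤ T then g t else 0) := by
    rw [intervalIntegral.integral_of_le hT0.le, hindeq,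
      MeasureTheory.setIntegral_indicator measurableSet_Iic, Set.Ioi_inter_Iic]
  -- pointwise sandwich
  have hxfact : ∀ t ∈ Set.Ioi (0:ℝ),
      Real.exp (-(1/T) * t) ≤ 1 ∧ (t ≤ T ↔ Real.exp (-1) ≤ Real.exp (-(1/T) * t)) := by
    intro t ht
    have ht' : (0:ℝ) < t := ht
    constructor
    · rw [Real.exp_le_one_iff]
      rw [neg_mul, neg_nonpos]
      positivity
    · rw [Real.exp_le_exp, show -(1/T) * t = -((1/T)*t) by ring, neg_le_neg_iff,
        div_mul_eq_mul_div, one_mul, div_le_one hT0]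
  have hky1 : ∀ t ∈ Set.Ioi (0:ℝ),
      (Real.exp (-(1/T) * t) * HardyAux.rlow δ (Real.exp (-(1/T) * t))) * g t
        ≤ (if t ≤ T then g t else 0) := by
    intro t ht
    obtain ⟨hx1, hiff⟩ := hxfact t ht
    have hg0 : 0 ≤ g t := (hg01 t (le_of_lt ht)).1
    by_cases h : t ≤ T
    · rw [if_pos h]
      have := HardyAux.rlow_le hδ0 (hiff.mp h)
      nlinarith [HardyAux.rlow_nonneg (δ := δ) (Real.exp (-(1/T) * t)),
        Real.exp_pos (-(1/T) * t)]
    · rw [if_neg h]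
      have hxb : Real.exp (-(1/T) * t) ≤ Real.exp (-1) := by
        by_contra hcon
        exact h (hiff.mpr (le_of_not_ge hcon))
      rw [HardyAux.rlow_zero hδ0 hxb]
      simp
  have hky2 : ∀ t ∈ Set.Ioi (0:ℝ),
      (if t ≤ T then g t else 0)
        ≤ (Real.exp (-(1/T) * t) * HardyAux.rhigh δ (Real.exp (-(1/T) * t))) * g t := by
    intro t ht
    obtain ⟨hx1, hiff⟩ := hxfact t ht
    have hg0 : 0 ≤ g t := (hg01 t (le_of_lt ht)).1
    by_cases h : t ≤ T
    · rw [if_pos h]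
      have := HardyAux.rhigh_ge hδ0 (hiff.mp h) hx1
      nlinarith
    · rw [if_neg h]
      have h1 := HardyAux.rhigh_nonneg hδ2 (Real.exp (-(1/T) * t))
      have h2 := Real.exp_pos (-(1/T) * t)
      positivity
  -- bounds on rlow/rhigh over [0,1] for integrability
  have hrlowbd : ∀ y ∈ Set.Icc (0:ℝ) 1, |HardyAux.rlow δ y| ≤ Real.exp 1 := by
    intro y hy
    rw [abs_of_nonneg (HardyAux.rlow_nonneg y)]
    apply max_le he.le
    apply le_trans (min_le_left _ _)
    have h1 : Real.exp (-1) ≤ max y (Real.exp (-1)) := le_max_right _ _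
    rw [div_le_iff₀ (by linarith)]
    nlinarith
  have hrhighbd : ∀ y ∈ Set.Icc (0:ℝ) 1, |HardyAux.rhigh δ y| ≤ 2 * Real.exp 1 := by
    intro y hy
    rw [abs_of_nonneg (HardyAux.rhigh_nonneg hδ2 y)]
    apply le_trans (min_le_left _ _)
    have h1 : Real.exp (-1) - δ ≤ max y (Real.exp (-1) - δ) := le_max_right _ _
    have h2 : 0 < Real.exp (-1) - δ := HardyAux.bδ_pos hδ2
    rw [div_le_iff₀ (by linarith)]
    nlinarith
  have hilow : IntegrableOn (fun t =>
      (Real.exp (-(1/T) * t) * HardyAux.rlow δ (Real.exp (-(1/T) * t))) * g t)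
      (Set.Ioi 0) :=
    HardyAux.int_cont g hg hl0 (HardyAux.rlow_cont hδ2) hrlowbd hg hg1
  have hihigh : IntegrableOn (fun t =>
      (Real.exp (-(1/T) * t) * HardyAux.rhigh δ (Real.exp (-(1/T) * t))) * g t)
      (Set.Ioi 0) :=
    HardyAux.int_cont g hg hl0 (HardyAux.rhigh_cont hδ2) hrhighbd hg hg1
  -- integrated sandwich
  have key1 : (∫ t in Set.Ioi (0:ℝ),
      (Real.exp (-(1/T) * t) * HardyAux.rlow δ (Real.exp (-(1/T) * t))) * g t)
      ≤ ∫ t in Set.Ioi (0:ℝ), (if t ≤ T then g t else 0) :=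
    setIntegral_mono_on hilow hmid_int measurableSet_Ioi hky1
  have key2 : (∫ t in Set.Ioi (0:ℝ), (if t ≤ T then g t else 0))
      ≤ ∫ t in Set.Ioi (0:ℝ),
      (Real.exp (-(1/T) * t) * HardyAux.rhigh δ (Real.exp (-(1/T) * t))) * g t :=
    setIntegral_mono_on hmid_int hihigh measurableSet_Ioi hky2
  -- numeric conclusion
  have hrl := HardyAux.rlow_int_bound hδ0 hδ2
  have hrh := HardyAux.rhigh_int_bound hδ0 hδ2
  have e1 : |L * (∫ x in (0:ℝ)..1, HardyAux.rlow δ x) - L| ≤ ε/8 := by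
    have heq : L * (∫ x in (0:ℝ)..1, HardyAux.rlow δ x) - L
        = L * ((∫ x in (0:ℝ)..1, HardyAux.rlow δ x) - 1) := by ring
    rw [heq, abs_mul]
    calc |L| * |(∫ x in (0:ℝ)..1, HardyAux.rlow δ x) - 1|
        ≤ 1 * (2 * Real.exp 1 * δ) := mul_le_mul hL hrl (abs_nonneg _) zero_le_one
      _ ≤ ε/8 := by linarith
  have e2 : |L * (∫ x in (0:ℝ)..1, HardyAux.rhigh δ x) - L| ≤ ε/8 := by
    have heq : L * (∫ x in (0:ℝ)..1, HardyAux.rhigh δ x) - L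
        = L * ((∫ x in (0:ℝ)..1, HardyAux.rhigh δ x) - 1) := by ring
    rw [heq, abs_mul]
    calc |L| * |(∫ x in (0:ℝ)..1, HardyAux.rhigh δ x) - 1|
        ≤ 1 * (2 * Real.exp 1 * δ) := mul_le_mul hL hrh (abs_nonneg _) zero_le_one
      _ ≤ ε/8 := by linarith
  rw [Real.dist_eq, hmid]
  rw [abs_lt] at hT1 hT2 ⊢
  obtain ⟨hT1a, hT1b⟩ := hT1
  obtain ⟨hT2a, hT2b⟩ := hT2
  rw [abs_le] at e1 e2
  have hmul1 : (1/T) * (∫ t in Set.Ioi (0:ℝ),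
      (Real.exp (-(1/T) * t) * HardyAux.rlow δ (Real.exp (-(1/T) * t))) * g t)
      ≤ (1/T) * ∫ t in Set.Ioi (0:ℝ), (if t ≤ T then g t else 0) :=
    mul_le_mul_of_nonneg_left key1 hl0.le
  have hmul2 : (1/T) * (∫ t in Set.Ioi (0:ℝ), (if t ≤ T then g t else 0))
      ≤ (1/T) * ∫ t in Set.Ioi (0:ℝ),
      (Real.exp (-(1/T) * t) * HardyAux.rhigh δ (Real.exp (-(1/T) * t))) * g t :=
    mul_le_mul_of_nonneg_left key2 hl0.le
  constructor
  · linarith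
  · linarith
end
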